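/- Let 𝔄 be a complete normed (Banach) algebra over ℝ and let a, b ∈ 𝔄. Then there exists a constant C ≥ 0, depending only on a and b, such that for every integer n ≥ 1, ‖(exp(a/n) · exp(b/n))^n − exp(a+b)‖ ≤ C/n (first-order convergence of the Lie–Trotter sequential splitting). -/

import Mathlib

set_option linter.unusedSectionVars false

section Aux

variable {𝔄 : Type*} [NormedRing 𝔄] [NormedAlgebra ℝ 𝔄] [CompleteSpace 𝔄]

lemma lt_exp_tail_bound (x : 𝔄) (k : ℕ) (hk : 1 ≤ k) :
    ‖NormedSpace.exp x - ∑ i ∈ Finset.range k, ((Nat.factorial i : ℕ) : ℝ)⁻¹ • x ^ i‖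
      ≤ ‖x‖ ^ k * Real.exp ‖x‖ := by
  have hs : Summable fun n : ℕ => ((Nat.factorial n : ℕ) : ℝ)⁻¹ • x ^ n := NormedSpace.expSeries_summable' x
  have h1 : NormedSpace.exp x - ∑ i ∈ Finset.range k, ((Nat.factorial i : ℕ) : ℝ)⁻¹ • x ^ i
      = ∑' n : ℕ, ((Nat.factorial (n + k) : ℕ) : ℝ)⁻¹ • x ^ (n + k) := by
    rw [NormedSpace.exp_eq_tsum ℝ]
    exact sub_eq_iff_eq_add'.mpr (Summable.sum_add_tsum_nat_add k hs).symm
  rw [h1]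
  have hexp : HasSum (fun n : ℕ => ‖x‖ ^ k * (‖x‖ ^ n / (Nat.factorial n : ℕ))) (‖x‖ ^ k * Real.exp ‖x‖) := by
    have h2 : HasSum (fun n : ℕ => ‖x‖ ^ n / (Nat.factorial n : ℕ)) (Real.exp ‖x‖) := by
      have h3 := (Real.summable_pow_div_factorial ‖x‖).hasSum
      have h4 : Real.exp ‖x‖ = ∑' n : ℕ, ‖x‖ ^ n / (Nat.factorial n : ℕ) := by
        rw [Real.exp_eq_exp_ℝ, NormedSpace.exp_eq_tsum_div]
      rwa [← h4] at h3
    exact h2.mul_left _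
  refine tsum_of_norm_bounded hexp fun n => ?_
  have hnk : 0 < n + k := by omega
  calc ‖((Nat.factorial (n + k) : ℕ) : ℝ)⁻¹ • x ^ (n + k)‖
      = ((Nat.factorial (n + k) : ℕ) : ℝ)⁻¹ * ‖x ^ (n + k)‖ := by
        rw [norm_smul, Real.norm_eq_abs, abs_of_nonneg (by positivity)]
    _ ≤ ((Nat.factorial n : ℕ) : ℝ)⁻¹ * ‖x‖ ^ (n + k) := by
        gcongr
        · exact Nat.le_add_right n k
        · exact norm_pow_le' x hnk
    _ = ‖x‖ ^ k * (‖x‖ ^ n / (Nat.factorial n : ℕ)) := by rw [pow_add]; ring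


lemma lt_exp_sub_one (x : 𝔄) : ‖NormedSpace.exp x - 1‖ ≤ ‖x‖ * Real.exp ‖x‖ := by
  have h := lt_exp_tail_bound x 1 le_rfl
  simpa [Finset.sum_range_one] using h

lemma lt_exp_sub_one_sub (x : 𝔄) :
    ‖NormedSpace.exp x - 1 - x‖ ≤ ‖x‖ ^ 2 * Real.exp ‖x‖ := by
  have h := lt_exp_tail_bound x 2 (by norm_num)
  have hs : ∑ i ∈ Finset.range 2, ((Nat.factorial i : ℕ) : ℝ)⁻¹ • x ^ i = 1 + x := by
    simp [Finset.sum_range_succ]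
  rw [hs] at h
  simpa [sub_sub] using h

lemma lt_norm_exp (x : 𝔄) :
    ‖NormedSpace.exp x‖ ≤ ‖(1 : 𝔄)‖ + ‖x‖ * Real.exp ‖x‖ := by
  have h := lt_exp_sub_one x
  calc ‖NormedSpace.exp x‖ = ‖(NormedSpace.exp x - 1) + 1‖ := by rw [sub_add_cancel]
    _ ≤ ‖NormedSpace.exp x - 1‖ + ‖(1 : 𝔄)‖ := norm_add_le _ _
    _ ≤ ‖(1 : 𝔄)‖ + ‖x‖ * Real.exp ‖x‖ := by linarith

lemma lt_norm_pow_le (x : 𝔄) (c : ℝ) (h : ‖x - 1‖ ≤ c) (k : ℕ) :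
    ‖x ^ k‖ ≤ ‖(1 : 𝔄)‖ * (1 + c) ^ k := by
  have hc : 0 ≤ c := le_trans (norm_nonneg _) h
  induction k with
  | zero => simp
  | succ k ih =>
    have hx : x ^ (k + 1) = x ^ k + x ^ k * (x - 1) := by noncomm_ring
    have h2 : ‖x ^ (k + 1)‖ ≤ ‖x ^ k‖ * (1 + c) := by
      rw [hx]
      have h3 := norm_add_le (x ^ k) (x ^ k * (x - 1))
      have h4 := norm_mul_le (x ^ k) (x - 1)
      nlinarith [norm_nonneg (x ^ k), norm_nonneg (x - 1)]
    calc ‖x ^ (k + 1)‖ ≤ ‖x ^ k‖ * (1 + c) := h2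
      _ ≤ (‖(1 : 𝔄)‖ * (1 + c) ^ k) * (1 + c) :=
          mul_le_mul_of_nonneg_right ih (by linarith)
      _ = ‖(1 : 𝔄)‖ * (1 + c) ^ (k + 1) := by ring

lemma lt_norm_pow_le_exp (x : 𝔄) (c : ℝ) (hc : 0 ≤ c) (n : ℕ) (hn : 1 ≤ n)
    (h : ‖x - 1‖ ≤ c / n) (k : ℕ) (hk : k ≤ n) :
    ‖x ^ k‖ ≤ ‖(1 : 𝔄)‖ * Real.exp c := by
  have hn0 : (0 : ℝ) < n := by exact_mod_cast hn
  have h1 := lt_norm_pow_le x (c / n) h k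
  have h2 : (1 + c / n : ℝ) ^ k ≤ Real.exp c := by
    have e1 : (1 + c / n : ℝ) ≤ Real.exp (c / n) := by
      linarith [Real.add_one_le_exp (c / n)]
    calc (1 + c / n : ℝ) ^ k ≤ Real.exp (c / n) ^ k :=
          pow_le_pow_left₀ (by positivity) e1 k
      _ = Real.exp (k * (c / n)) := (Real.exp_nat_mul _ k).symm
      _ ≤ Real.exp c := by
          refine Real.exp_le_exp.mpr ?_
          have hkn : (k : ℝ) ≤ (n : ℝ) := by exact_mod_cast hk
          have : (k : ℝ) * (c / n) ≤ (n : ℝ) * (c / n) :=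
            mul_le_mul_of_nonneg_right hkn (by positivity)
          have he : (n : ℝ) * (c / n) = c := by field_simp
          linarith
  calc ‖x ^ k‖ ≤ ‖(1 : 𝔄)‖ * (1 + c / n) ^ k := h1
    _ ≤ ‖(1 : 𝔄)‖ * Real.exp c := mul_le_mul_of_nonneg_left h2 (norm_nonneg _)

lemma lt_pow_sub_pow (x y : 𝔄) (n : ℕ) :
    x ^ n - y ^ n = ∑ i ∈ Finset.range n, x ^ i * (x - y) * y ^ (n - 1 - i) := by
  induction n with
  | zero => simp
  | succ n ih =>
    rw [Finset.sum_range_succ]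
    have key : ∀ i ∈ Finset.range n,
        x ^ i * (x - y) * y ^ (n + 1 - 1 - i) = x ^ i * (x - y) * y ^ (n - 1 - i) * y := by
      intro i hi
      have hi' : i < n := Finset.mem_range.mp hi
      have he : n + 1 - 1 - i = (n - 1 - i) + 1 := by omega
      rw [he, pow_succ, ← mul_assoc]
    rw [Finset.sum_congr rfl key, ← Finset.sum_mul, ← ih]
    have he : n + 1 - 1 - n = 0 := by omega
    rw [he, pow_zero, mul_one]
    noncomm_ring

lemma lt_norm_pow_sub_pow_le (x y : 𝔄) (P Q D : ℝ) (n : ℕ)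
    (hP : ∀ k ≤ n, ‖x ^ k‖ ≤ P) (hQ : ∀ k ≤ n, ‖y ^ k‖ ≤ Q) (hD : ‖x - y‖ ≤ D) :
    ‖x ^ n - y ^ n‖ ≤ n * (P * D * Q) := by
  have hD0 : 0 ≤ D := le_trans (norm_nonneg _) hD
  have hP0 : 0 ≤ P := le_trans (norm_nonneg _) (hP 0 (Nat.zero_le _))
  have hQ0 : 0 ≤ Q := le_trans (norm_nonneg _) (hQ 0 (Nat.zero_le _))
  rw [lt_pow_sub_pow]
  calc ‖∑ i ∈ Finset.range n, x ^ i * (x - y) * y ^ (n - 1 - i)‖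
      ≤ ∑ i ∈ Finset.range n, ‖x ^ i * (x - y) * y ^ (n - 1 - i)‖ := norm_sum_le _ _
    _ ≤ ∑ _i ∈ Finset.range n, P * D * Q := by
        refine Finset.sum_le_sum fun i hi => ?_
        have hi' : i < n := Finset.mem_range.mp hi
        have h1 : ‖x ^ i‖ ≤ P := hP i (by omega)
        have h2 : ‖y ^ (n - 1 - i)‖ ≤ Q := hQ _ (by omega)
        calc ‖x ^ i * (x - y) * y ^ (n - 1 - i)‖
            ≤ ‖x ^ i * (x - y)‖ * ‖y ^ (n - 1 - i)‖ := norm_mul_le _ _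
          _ ≤ ‖x ^ i‖ * ‖x - y‖ * ‖y ^ (n - 1 - i)‖ :=
              mul_le_mul_of_nonneg_right (norm_mul_le _ _) (norm_nonneg _)
          _ ≤ P * D * Q := by
              refine mul_le_mul (mul_le_mul h1 hD (norm_nonneg _) hP0) h2
                (norm_nonneg _) (by positivity)
    _ = n * (P * D * Q) := by
        rw [Finset.sum_const, Finset.card_range, nsmul_eq_mul]

end Aux

/-- First-order convergence of the Lie–Trotter sequential splitting in a real Banach
algebra: for `a, b ∈ 𝔄` there is `C ≥ 0` (depending only on `a` and `b`) such that
`‖(exp(a/n) exp(b/n))^n - exp(a+b)‖ ≤ C/n` for all `n ≥ 1`. -/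
theorem lie_trotter_first_order (𝔄 : Type*) [NormedRing 𝔄] [NormedAlgebra ℝ 𝔄]
    [CompleteSpace 𝔄] (a b : 𝔄) :
    ∃ C : ℝ, 0 ≤ C ∧ ∀ n : ℕ, 1 ≤ n →
      ‖(NormedSpace.exp ((1 / (n : ℝ)) • a) * NormedSpace.exp ((1 / (n : ℝ)) • b)) ^ n -
          NormedSpace.exp (a + b)‖ ≤ C / n := by
  set ea := Real.exp ‖a‖ with hea
  set eb := Real.exp ‖b‖ with heb
  set eab := Real.exp ‖a + b‖ with heab
  set o := ‖(1 : 𝔄)‖ with ho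
  set Eb := o + ‖b‖ * eb with hEb
  set cS := ‖a‖ * ea * Eb + ‖b‖ * eb with hcS
  set cT := ‖a + b‖ * eab with hcT
  set K := ‖a‖ ^ 2 * ea * Eb + (o + ‖a‖) * (‖b‖ ^ 2 * eb) + ‖a‖ * ‖b‖
      + ‖a + b‖ ^ 2 * eab with hK
  have hea0 : 0 < ea := Real.exp_pos _
  have heb0 : 0 < eb := Real.exp_pos _
  have heab0 : 0 < eab := Real.exp_pos _
  have ho0 : 0 ≤ o := norm_nonneg _
  have hEb0 : 0 ≤ Eb := by positivity
  have hcS0 : 0 ≤ cS := by positivity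
  have hcT0 : 0 ≤ cT := by positivity
  have hK0 : 0 ≤ K := by positivity
  refine ⟨o * Real.exp cS * K * (o * Real.exp cT), by positivity, ?_⟩
  intro n hn
  have hn0 : (0 : ℝ) < n := by exact_mod_cast hn
  set τ : ℝ := 1 / (n : ℝ) with hτ
  have hτ0 : 0 < τ := by positivity
  have hτ1 : τ ≤ 1 := by rw [hτ, div_le_one hn0]; exact_mod_cast hn
  set A := τ • a with hA
  set B := τ • b with hB
  have hnA : ‖A‖ = τ * ‖a‖ := by rw [hA, norm_smul, Real.norm_eq_abs, abs_of_pos hτ0]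
  have hnB : ‖B‖ = τ * ‖b‖ := by rw [hB, norm_smul, Real.norm_eq_abs, abs_of_pos hτ0]
  have hABs : A + B = τ • (a + b) := (smul_add τ a b).symm
  have hnAB : ‖A + B‖ = τ * ‖a + b‖ := by
    rw [hABs, norm_smul, Real.norm_eq_abs, abs_of_pos hτ0]
  have hAa : ‖A‖ ≤ ‖a‖ := by rw [hnA]; exact mul_le_of_le_one_left (norm_nonneg a) hτ1
  have hBb : ‖B‖ ≤ ‖b‖ := by rw [hnB]; exact mul_le_of_le_one_left (norm_nonneg b) hτ1
  have hABab : ‖A + B‖ ≤ ‖a + b‖ := by rw [hnAB]; exact mul_le_of_le_one_left (norm_nonneg _) hτ1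
  set S := NormedSpace.exp A * NormedSpace.exp B with hS
  set T := NormedSpace.exp (A + B) with hT
  have heA : Real.exp ‖A‖ ≤ ea := Real.exp_le_exp.mpr hAa
  have heB : Real.exp ‖B‖ ≤ eb := Real.exp_le_exp.mpr hBb
  have heAB : Real.exp ‖A + B‖ ≤ eab := Real.exp_le_exp.mpr hABab
  have hexpB : ‖NormedSpace.exp B‖ ≤ Eb := by
    refine (lt_norm_exp B).trans ?_
    rw [hEb, ← ho]
    have h1 : ‖B‖ * Real.exp ‖B‖ ≤ ‖b‖ * eb :=
      mul_le_mul hBb heB (Real.exp_pos _).le (norm_nonneg b)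
    linarith
  have hRA : ‖NormedSpace.exp A - 1 - A‖ ≤ τ ^ 2 * (‖a‖ ^ 2 * ea) := by
    refine (lt_exp_sub_one_sub A).trans ?_
    rw [hnA]
    calc (τ * ‖a‖) ^ 2 * Real.exp (τ * ‖a‖) ≤ (τ * ‖a‖) ^ 2 * ea := by
          refine mul_le_mul_of_nonneg_left ?_ (by positivity)
          rw [← hnA]; exact heA
      _ = τ ^ 2 * (‖a‖ ^ 2 * ea) := by ring
  have hRB : ‖NormedSpace.exp B - 1 - B‖ ≤ τ ^ 2 * (‖b‖ ^ 2 * eb) := by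
    refine (lt_exp_sub_one_sub B).trans ?_
    rw [hnB]
    calc (τ * ‖b‖) ^ 2 * Real.exp (τ * ‖b‖) ≤ (τ * ‖b‖) ^ 2 * eb := by
          refine mul_le_mul_of_nonneg_left ?_ (by positivity)
          rw [← hnB]; exact heB
      _ = τ ^ 2 * (‖b‖ ^ 2 * eb) := by ring
  have hRAB : ‖T - 1 - (A + B)‖ ≤ τ ^ 2 * (‖a + b‖ ^ 2 * eab) := by
    rw [hT]
    refine (lt_exp_sub_one_sub (A + B)).trans ?_
    rw [hnAB]
    calc (τ * ‖a + b‖) ^ 2 * Real.exp (τ * ‖a + b‖)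
        ≤ (τ * ‖a + b‖) ^ 2 * eab := by
          refine mul_le_mul_of_nonneg_left ?_ (by positivity)
          rw [← hnAB]; exact heAB
      _ = τ ^ 2 * (‖a + b‖ ^ 2 * eab) := by ring
  have hS1 : ‖S - 1‖ ≤ cS / n := by
    have hdec : S - 1 = (NormedSpace.exp A - 1) * NormedSpace.exp B
        + (NormedSpace.exp B - 1) := by rw [hS]; noncomm_ring
    have h1 : ‖NormedSpace.exp A - 1‖ ≤ τ * (‖a‖ * ea) := by
      refine (lt_exp_sub_one A).trans ?_
      rw [hnA]
      calc τ * ‖a‖ * Real.exp (τ * ‖a‖) ≤ τ * ‖a‖ * ea := by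
            refine mul_le_mul_of_nonneg_left ?_ (by positivity)
            rw [← hnA]; exact heA
        _ = τ * (‖a‖ * ea) := by ring
    have h2 : ‖NormedSpace.exp B - 1‖ ≤ τ * (‖b‖ * eb) := by
      refine (lt_exp_sub_one B).trans ?_
      rw [hnB]
      calc τ * ‖b‖ * Real.exp (τ * ‖b‖) ≤ τ * ‖b‖ * eb := by
            refine mul_le_mul_of_nonneg_left ?_ (by positivity)
            rw [← hnB]; exact heB
        _ = τ * (‖b‖ * eb) := by ring
    calc ‖S - 1‖ ≤ ‖(NormedSpace.exp A - 1) * NormedSpace.exp B‖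
          + ‖NormedSpace.exp B - 1‖ := by rw [hdec]; exact norm_add_le _ _
      _ ≤ ‖NormedSpace.exp A - 1‖ * ‖NormedSpace.exp B‖
          + ‖NormedSpace.exp B - 1‖ := by
            have := norm_mul_le (NormedSpace.exp A - 1) (NormedSpace.exp B)
            linarith
      _ ≤ τ * (‖a‖ * ea) * Eb + τ * (‖b‖ * eb) := by
            have h3 : ‖NormedSpace.exp A - 1‖ * ‖NormedSpace.exp B‖
                ≤ τ * (‖a‖ * ea) * Eb :=
              mul_le_mul h1 hexpB (norm_nonneg _) (by positivity)
            linarith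
      _ = cS / n := by rw [hcS, hτ]; field_simp
  have hT1 : ‖T - 1‖ ≤ cT / n := by
    rw [hT]
    refine (lt_exp_sub_one (A + B)).trans ?_
    rw [hnAB]
    calc τ * ‖a + b‖ * Real.exp (τ * ‖a + b‖) ≤ τ * ‖a + b‖ * eab := by
          refine mul_le_mul_of_nonneg_left ?_ (by positivity)
          rw [← hnAB]; exact heAB
      _ = cT / n := by rw [hcT, hτ]; field_simp
  have hST : ‖S - T‖ ≤ τ ^ 2 * K := by
    have hdec : S - T = (NormedSpace.exp A - 1 - A) * NormedSpace.exp B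
        + (1 + A) * (NormedSpace.exp B - 1 - B) + A * B - (T - 1 - (A + B)) := by
      rw [hS, hT]; noncomm_ring
    have h1 : ‖(NormedSpace.exp A - 1 - A) * NormedSpace.exp B‖
        ≤ τ ^ 2 * (‖a‖ ^ 2 * ea) * Eb :=
      (norm_mul_le _ _).trans (mul_le_mul hRA hexpB (norm_nonneg _) (by positivity))
    have h2 : ‖(1 + A) * (NormedSpace.exp B - 1 - B)‖
        ≤ (o + ‖a‖) * (τ ^ 2 * (‖b‖ ^ 2 * eb)) := by
      refine (norm_mul_le _ _).trans (mul_le_mul ?_ hRB (norm_nonneg _) (by positivity))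
      refine (norm_add_le _ _).trans ?_
      rw [← ho, hnA]
      have h5 := mul_le_of_le_one_left (norm_nonneg a) hτ1
      linarith
    have h3 : ‖A * B‖ ≤ τ ^ 2 * (‖a‖ * ‖b‖) := by
      refine (norm_mul_le _ _).trans ?_
      rw [hnA, hnB]; apply le_of_eq; ring
    calc ‖S - T‖ ≤ ‖(NormedSpace.exp A - 1 - A) * NormedSpace.exp B
          + (1 + A) * (NormedSpace.exp B - 1 - B) + A * B‖ + ‖T - 1 - (A + B)‖ := by
            rw [hdec]; exact norm_sub_le _ _
      _ ≤ ‖(NormedSpace.exp A - 1 - A) * NormedSpace.exp B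
          + (1 + A) * (NormedSpace.exp B - 1 - B)‖ + ‖A * B‖ + ‖T - 1 - (A + B)‖ := by
            have := norm_add_le ((NormedSpace.exp A - 1 - A) * NormedSpace.exp B
              + (1 + A) * (NormedSpace.exp B - 1 - B)) (A * B)
            linarith
      _ ≤ ‖(NormedSpace.exp A - 1 - A) * NormedSpace.exp B‖
          + ‖(1 + A) * (NormedSpace.exp B - 1 - B)‖ + ‖A * B‖ + ‖T - 1 - (A + B)‖ := by
            have := norm_add_le ((NormedSpace.exp A - 1 - A) * NormedSpace.exp B)
              ((1 + A) * (NormedSpace.exp B - 1 - B))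
            linarith
      _ ≤ τ ^ 2 * (‖a‖ ^ 2 * ea) * Eb + (o + ‖a‖) * (τ ^ 2 * (‖b‖ ^ 2 * eb))
          + τ ^ 2 * (‖a‖ * ‖b‖) + τ ^ 2 * (‖a + b‖ ^ 2 * eab) := by linarith
      _ = τ ^ 2 * K := by rw [hK]; ring
  have hPpow : ∀ k ≤ n, ‖S ^ k‖ ≤ o * Real.exp cS := fun k hk =>
    lt_norm_pow_le_exp S cS hcS0 n hn hS1 k hk
  have hQpow : ∀ k ≤ n, ‖T ^ k‖ ≤ o * Real.exp cT := fun k hk =>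
    lt_norm_pow_le_exp T cT hcT0 n hn hT1 k hk
  have hTn : T ^ n = NormedSpace.exp (a + b) := by
    letI : NormedAlgebra ℚ 𝔄 := NormedAlgebra.restrictScalars ℚ ℝ 𝔄
    rw [hT, hABs, ← NormedSpace.exp_nsmul]
    congr 1
    rw [← Nat.cast_smul_eq_nsmul ℝ, smul_smul]
    have h4 : (n : ℝ) * τ = 1 := by rw [hτ]; field_simp
    rw [h4, one_smul]
  have hkey := lt_norm_pow_sub_pow_le S T (o * Real.exp cS) (o * Real.exp cT)
    (τ ^ 2 * K) n hPpow hQpow hST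
  rw [← hTn]
  refine hkey.trans (le_of_eq ?_)
  rw [hτ]
  field_simp
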